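/- arXiv:2505.22502 — 3 statements merged into one kernel-verified Lean document; each statement's English description precedes it below -/
import Mathlib

section
/- Define the kernel k : ℝ×ℝ → ℝ by k(x,y) = 1 + exp(−x²) if x = y and k(x,y) = 0 otherwise. Then: (i) k is symmetric and positive semi-definite with diagonal bounded by 2; (ii) for any pairwise distinct points x₁,…,x_m ∈ ℝ, the Gram matrix (k(x_i,x_j))_{i,j=1}^m is diagonal with every diagonal entry strictly greater than 1, so its smallest eigenvalue exceeds 1; (iii) if μ is a Borel probability measure on ℝ absolutely continuous with respect to Lebesgue measure, then k = 0 (μ⊗μ)-almost everywhere (so k ∈ L²(μ⊗μ) and the integral operator T_k is the zero operator), yet for i.i.d. μ-distributed X₁, X₂, …, almost surely the smallest eigenvalue λ̃_{m,m} of K_m exceeds 1 for every m, and hence C = lim_{m→∞} λ̃_{m,m} ≥ 1 almost surely. In particular the limit C in the asymptotic condition-number formula need not be 0. -/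
open MeasureTheory Filter Matrix
open scoped Topology ENNReal ProbabilityTheory

/-- The `n`-th largest eigenvalue (0-indexed, counted with multiplicity) of a real
square matrix, defined as the `n`-th entry of the list of roots of its characteristic
polynomial sorted in decreasing order (and `0` if `n` is out of range). -/
noncomputable def nthEig {m : ℕ} (A : Matrix (Fin m) (Fin m) ℝ) (n : ℕ) : ℝ :=
  ((A.charpoly.roots.sort (· ≤ ·)).reverse).getD n 0

/-- The `m × m` Gram matrix of the kernel `k` on the first `m` points of `x`. -/
noncomputable def gram {χ : Type*} (k : χ → χ → ℝ) (x : ℕ → χ) (m : ℕ) :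
    Matrix (Fin m) (Fin m) ℝ :=
  Matrix.of fun i j : Fin m => k (x i) (x j)

/-- The counterexample kernel `k(x,y) = 1 + exp(−x²)` if `x = y` and `0` otherwise. -/
noncomputable def kcex : ℝ → ℝ → ℝ := fun x y =>
  if x = y then 1 + Real.exp (-(x ^ 2)) else 0

lemma kcex_pos_diag (x : ℝ) : 1 < kcex x x := by
  simp [kcex]; positivity

lemma kcex_psd (m : ℕ) (x : Fin m → ℝ) :
    (Matrix.of fun i j : Fin m => kcex (x i) (x j)).PosSemidef := by
  classical
  set c : ℝ → ℝ := fun t => 1 + Real.exp (-(t ^ 2)) with hc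
  have hc0 : ∀ t, 0 ≤ c t := fun t => by positivity
  set S : Finset ℝ := Finset.image x Finset.univ with hS
  set B : Matrix {y // y ∈ S} (Fin m) ℝ :=
    Matrix.of fun y i => if x i = y.1 then Real.sqrt (c y.1) else 0 with hB
  have hAB : (Matrix.of fun i j : Fin m => kcex (x i) (x j)) = Bᴴ * B := by
    ext i j
    simp only [Matrix.mul_apply, Matrix.conjTranspose_apply, hB, Matrix.of_apply, star_trivial]
    by_cases h : x i = x j
    · rw [Fintype.sum_eq_single (⟨x i, Finset.mem_image_of_mem x (Finset.mem_univ i)⟩ :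
        {y // y ∈ S})]
      · rw [if_pos rfl, if_pos h.symm, Real.mul_self_sqrt (hc0 (x i))]
        simp only [kcex, if_pos h, hc]
      · rintro ⟨y, hy⟩ hne
        have : x i ≠ y := fun hxy => hne (by simp [hxy])
        simp [this]
    · rw [Fintype.sum_eq_zero]
      · simp [kcex, h]
      · rintro ⟨y, hy⟩
        by_cases h1 : x i = y
        · have : x j ≠ y := fun h2 => h (h1.trans h2.symm)
          simp [this]
        · simp [h1]
  rw [hAB]
  exact Matrix.posSemidef_conjTranspose_mul_self B

lemma charpoly_roots_diag {m : ℕ} (d : Fin m → ℝ) :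
    (Matrix.diagonal d).charpoly.roots = Multiset.map d Finset.univ.val := by
  classical
  have h1 : (Matrix.diagonal d).charpoly = ∏ i : Fin m, (Polynomial.X - Polynomial.C (d i)) := by
    have := Matrix.charpoly_of_upperTriangular _ (Matrix.blockTriangular_diagonal (b := id) d)
    simpa using this
  rw [h1, Polynomial.roots_prod _ _ ?_]
  · simp [Polynomial.roots_X_sub_C, Multiset.bind_singleton]
  · exact (Polynomial.monic_prod_of_monic _ _ fun i _ => Polynomial.monic_X_sub_C _).ne_zero

lemma sort_reverse_getD_mem (s : Multiset ℝ) (n : ℕ) (hn : n < Multiset.card s) :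
    ((s.sort (· ≤ ·)).reverse).getD n 0 ∈ s := by
  have hlen : ((s.sort (· ≤ ·)).reverse).length = Multiset.card s := by
    simp [Multiset.length_sort]
  have hn' : n < ((s.sort (· ≤ ·)).reverse).length := hlen ▸ hn
  rw [List.getD_eq_getElem _ _ hn']
  have hmem := List.getElem_mem hn'
  rw [List.mem_reverse, Multiset.mem_sort] at hmem
  exact hmem

lemma nthEig_diag_mem {m : ℕ} (d : Fin m → ℝ) (n : ℕ) (hn : n < m) :
    ∃ i, nthEig (Matrix.diagonal d) n = d i := by
  classical
  have := sort_reverse_getD_mem (Matrix.diagonal d).charpoly.roots n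
    (by rw [charpoly_roots_diag]; simpa using hn)
  rw [charpoly_roots_diag, Multiset.mem_map] at this
  obtain ⟨i, _, hi⟩ := this
  refine ⟨i, ?_⟩
  unfold nthEig
  rw [charpoly_roots_diag]
  exact hi.symm

lemma gram_inj_eig {m : ℕ} (x : Fin m → ℝ) (hx : Function.Injective x) (hm : 1 ≤ m) :
    1 < nthEig (Matrix.of fun i j : Fin m => kcex (x i) (x j)) (m - 1) := by
  classical
  have hdiag : (Matrix.of fun i j : Fin m => kcex (x i) (x j)) =
      Matrix.diagonal (fun i => kcex (x i) (x i)) := by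
    ext i j
    by_cases h : i = j
    · simp [h]
    · have : x i ≠ x j := fun he => h (hx he)
      simp [Matrix.diagonal_apply_ne _ h, kcex, this]
  rw [hdiag]
  obtain ⟨i, hi⟩ := nthEig_diag_mem (fun i => kcex (x i) (x i)) (m - 1) (by omega)
  rw [hi]
  exact kcex_pos_diag (x i)

lemma diag_null (μ : Measure ℝ) [IsProbabilityMeasure μ] (hμ : μ ≪ volume) :
    (μ.prod μ) {p : ℝ × ℝ | p.1 = p.2} = 0 := by
  have hD : MeasurableSet {p : ℝ × ℝ | p.1 = p.2} :=
    measurableSet_eq_fun measurable_fst measurable_snd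
  rw [Measure.prod_apply hD]
  have : ∀ x : ℝ, Prod.mk x ⁻¹' {p : ℝ × ℝ | p.1 = p.2} = {x} := by
    intro x; ext y; simp [eq_comm]
  simp only [this]
  have hx : ∀ x : ℝ, μ {x} = 0 := fun x => hμ Real.volume_singleton
  simp [hx]

/-- **Counterexample to `C = 0`.**
The kernel `k(x,y) = (1 + e^{−x²})·1_{x=y}` is symmetric, positive semi-definite with
diagonal bounded by `2`; Gram matrices at pairwise distinct points are diagonal with
diagonal entries `> 1`, hence smallest eigenvalue `> 1`; for `μ` absolutely continuous
with respect to Lebesgue measure, `k = 0` `(μ⊗μ)`-a.e. (so `k ∈ L²(μ⊗μ)`), yet for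
i.i.d. `μ`-distributed data the smallest eigenvalue `λ̃_{m,m}` of `K_m` exceeds `1`
almost surely for every `m ≥ 1`, and hence `C = lim_m λ̃_{m,m} ≥ 1` almost surely. -/
theorem counterexample_C_not_zero
    {Ω : Type*} [MeasureSpace Ω] [IsProbabilityMeasure (ℙ : Measure Ω)]
    (μ : Measure ℝ) [IsProbabilityMeasure μ] (hμ : μ ≪ volume)
    (X : ℕ → Ω → ℝ) (hX_meas : ∀ i, Measurable (X i))
    (hX_indep : ProbabilityTheory.iIndepFun X (ℙ : Measure Ω))
    (hX_law : ∀ i, Measure.map (X i) (ℙ : Measure Ω) = μ) :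
    -- (i) symmetric, positive semi-definite, diagonal bounded by 2
    ((∀ x y, kcex x y = kcex y x) ∧
      (∀ (m : ℕ) (x : Fin m → ℝ),
        (Matrix.of fun i j : Fin m => kcex (x i) (x j)).PosSemidef) ∧
      (∀ x, kcex x x ≤ 2)) ∧
    -- (ii) Gram matrices at pairwise distinct points are diagonal with entries > 1,
    -- so the smallest eigenvalue exceeds 1
    (∀ (m : ℕ) (x : Fin m → ℝ), Function.Injective x →
      (∀ i j : Fin m, i ≠ j → (Matrix.of fun i j : Fin m => kcex (x i) (x j)) i j = 0) ∧
      (∀ i : Fin m, 1 < (Matrix.of fun i j : Fin m => kcex (x i) (x j)) i i) ∧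
      (1 ≤ m → 1 < nthEig (Matrix.of fun i j : Fin m => kcex (x i) (x j)) (m - 1))) ∧
    -- (iii) `k = 0` a.e. for absolutely continuous `μ`, so `k ∈ L²(μ⊗μ)`, …
    ((fun p : ℝ × ℝ => kcex p.1 p.2) =ᵐ[μ.prod μ] 0) ∧
    MemLp (fun p : ℝ × ℝ => kcex p.1 p.2) 2 (μ.prod μ) ∧
    -- … yet almost surely every smallest Gram eigenvalue exceeds 1 …
    (∀ᵐ ω ∂(ℙ : Measure Ω), ∀ m : ℕ, 1 ≤ m →
      1 < nthEig (gram kcex (fun i => X i ω) m) (m - 1)) ∧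
    -- … hence the limit `C` of the smallest eigenvalues is ≥ 1 almost surely
    (∀ C : Ω → ℝ,
      (∀ᵐ ω ∂(ℙ : Measure Ω),
        Tendsto (fun m : ℕ => nthEig (gram kcex (fun i => X i ω) m) (m - 1))
          atTop (𝓝 (C ω))) →
      ∀ᵐ ω ∂(ℙ : Measure Ω), 1 ≤ C ω) := by
  
  have h_ae : (fun p : ℝ × ℝ => kcex p.1 p.2) =ᵐ[μ.prod μ] 0 := by
    have hne : ∀ᵐ p ∂(μ.prod μ), p.1 ≠ p.2 := by
      rw [ae_iff]
      simpa using diag_null μ hμ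
    filter_upwards [hne] with p hp
    simp [kcex, hp]
  have h_as : ∀ᵐ ω ∂(ℙ : Measure Ω), ∀ m : ℕ, 1 ≤ m →
      1 < nthEig (gram kcex (fun i => X i ω) m) (m - 1) := by
    have hpair : ∀ i j : ℕ, i ≠ j → ∀ᵐ ω ∂(ℙ : Measure Ω), X i ω ≠ X j ω := by
      intro i j hij
      have hindep := hX_indep.indepFun hij
      have hmap : Measure.map (fun ω => (X i ω, X j ω)) (ℙ : Measure Ω) = μ.prod μ := by
        rw [(ProbabilityTheory.indepFun_iff_map_prod_eq_prod_map_map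
          (hX_meas i).aemeasurable (hX_meas j).aemeasurable).mp hindep, hX_law i, hX_law j]
      have hD : MeasurableSet {p : ℝ × ℝ | p.1 = p.2} :=
        measurableSet_eq_fun measurable_fst measurable_snd
      have h0 : (ℙ : Measure Ω) {ω | X i ω = X j ω} = 0 := by
        have hmeas : Measurable fun ω => (X i ω, X j ω) := (hX_meas i).prodMk (hX_meas j)
        have := Measure.map_apply (μ := (ℙ : Measure Ω)) hmeas hD
        rw [hmap, diag_null μ hμ] at this
        exact this.symm
      rw [ae_iff]
      simpa using h0
    have h_inj : ∀ᵐ ω ∂(ℙ : Measure Ω), ∀ i j : ℕ, i ≠ j → X i ω ≠ X j ω := by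
      refine ae_all_iff.2 fun i => ae_all_iff.2 fun j => ?_
      by_cases h : i = j
      · exact Eventually.of_forall fun ω hij => absurd h hij
      · filter_upwards [hpair i j h] with ω h' _
        exact h'
    filter_upwards [h_inj] with ω hω m hm
    have hinj : Function.Injective fun i : Fin m => X (i : ℕ) ω := by
      intro a b hab
      by_contra hne
      exact hω a b (fun h => hne (Fin.ext h)) hab
    exact gram_inj_eig _ hinj hm
  refine ⟨⟨?_, kcex_psd, ?_⟩, ?_, h_ae, MemLp.ae_eq h_ae.symm MemLp.zero, h_as, ?_⟩
  · intro x y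
    by_cases h : x = y
    · subst h; rfl
    · simp [kcex, h, Ne.symm h]
  · intro x
    have h1 : Real.exp (-(x ^ 2)) ≤ 1 :=
      Real.exp_le_one_iff.mpr (neg_nonpos.mpr (sq_nonneg x))
    show (if x = x then 1 + Real.exp (-(x ^ 2)) else 0) ≤ 2
    rw [if_pos rfl]
    linarith
  · intro m x hx
    refine ⟨?_, ?_, fun hm => gram_inj_eig x hx hm⟩
    · intro i j hij
      have : x i ≠ x j := fun h => hij (hx h)
      simp [kcex, this]
    · intro i
      exact kcex_pos_diag (x i)
  · intro C hC
    filter_upwards [hC, h_as] with ω hten hev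
    exact ge_of_tendsto hten (eventually_atTop.2 ⟨1, fun m hm => (hev m hm).le⟩)
end

section
/- Separability of the Gaussian integral eigenproblem: let l > 0, d ∈ ℕ, v ∈ ℝ^d, and let Σ be a real symmetric positive definite d×d matrix with orthogonal diagonalisation Σ = Pᵀ D P where D = diag(ν₁,…,ν_d), ν_i > 0, and P orthogonal. Let p be the density of the N(v, Σ) distribution on ℝ^d and for each i let p_i be the density of N(0, ν_i) on ℝ. Suppose for each i ∈ {1,…,d} the function ψ_i : ℝ → ℝ and scalar μ_i ∈ ℝ satisfy, for all t ∈ ℝ, ∫_ℝ exp(−(s−t)²/(2l²)) ψ_i(s) p_i(s) ds = μ_i ψ_i(t) (with ψ_i · p_i integrable). Then the function Φ(x) = ∏_{i=1}^d ψ_i([P(x−v)]_i) satisfies, for all y ∈ ℝ^d, ∫_{ℝ^d} exp(−‖x−y‖²/(2l²)) Φ(x) p(x) dx = (∏_{i=1}^d μ_i) · Φ(y); i.e. Φ is an eigenfunction of the integral operator of the RBF kernel with respect to the N(v, Σ) measure, with eigenvalue ∏_i μ_i. -/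
open MeasureTheory Filter Matrix
open scoped Topology Real

/-- **Separability of the Gaussian integral eigenproblem.**
If each `ψᵢ` is an eigenfunction (with eigenvalue `μᵢ`) of the one-dimensional RBF
integral operator with respect to the `N(0, νᵢ)` density, then
`Φ(x) = ∏ᵢ ψᵢ([P(x−v)]ᵢ)` is an eigenfunction of the `d`-dimensional RBF integral
operator with respect to the `N(v, Σ)` density, with eigenvalue `∏ᵢ μᵢ`. -/
theorem gaussian_rbf_eigenproblem_separable
    (d : ℕ) (l : ℝ) (hl : 0 < l)
    (v : Fin d → ℝ)
    (S : Matrix (Fin d) (Fin d) ℝ) (hS_symm : S.IsSymm) (hS_pd : S.PosDef)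
    (P : Matrix (Fin d) (Fin d) ℝ) (hP : Pᵀ * P = 1)
    (ν : Fin d → ℝ) (hν : ∀ i, 0 < ν i)
    (hS_diag : S = Pᵀ * Matrix.diagonal ν * P)
    -- the density of the `N(v, Σ)` distribution on `ℝ^d`
    (p : (Fin d → ℝ) → ℝ)
    (hp : p = fun x => (2 * π) ^ (-(d : ℝ) / 2) * S.det ^ (-(1 : ℝ) / 2) *
      Real.exp (-(dotProduct (x - v) (S⁻¹.mulVec (x - v))) / 2))
    -- the densities of the `N(0, νᵢ)` distributions on `ℝ`
    (p₁ : Fin d → ℝ → ℝ)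
    (hp₁ : ∀ i, p₁ i = fun s =>
      (2 * π * ν i) ^ (-(1 : ℝ) / 2) * Real.exp (-(s ^ 2) / (2 * ν i)))
    (ψ : Fin d → ℝ → ℝ) (μ : Fin d → ℝ)
    (h_int : ∀ i, Integrable (fun s => ψ i s * p₁ i s))
    -- each `ψᵢ` solves the one-dimensional eigenproblem with eigenvalue `μᵢ`
    (h_eig : ∀ i, ∀ t : ℝ,
      ∫ s : ℝ, Real.exp (-(s - t) ^ 2 / (2 * l ^ 2)) * ψ i s * p₁ i s = μ i * ψ i t) :
    ∀ y : Fin d → ℝ,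
      ∫ x : Fin d → ℝ,
          Real.exp (-(∑ i, (x i - y i) ^ 2) / (2 * l ^ 2)) *
            (∏ i, ψ i (P.mulVec (x - v) i)) * p x
        = (∏ i, μ i) * ∏ i, ψ i (P.mulVec (y - v) i) := by
  classical
  intro y
  -- basic facts about `P`
  have hPP : P * Pᵀ = 1 := mul_eq_one_comm.mp hP
  have hdetP : P.det * P.det = 1 := by
    have := congrArg Matrix.det hP
    rwa [Matrix.det_mul, Matrix.det_transpose, Matrix.det_one] at this
  have hdetP_ne : P.det ≠ 0 := by
    intro h; rw [h, mul_zero] at hdetP; exact zero_ne_one hdetP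
  have habs : |P.det| = 1 := by
    have h1 : |P.det| * |P.det| = 1 := by rw [← abs_mul, hdetP, abs_one]
    nlinarith [abs_nonneg P.det]
  -- quadratic forms
  have hquad : ∀ (w : Fin d → ℝ) (z : Fin d → ℝ),
      dotProduct z ((Pᵀ * Matrix.diagonal w * P).mulVec z)
        = ∑ i, w i * (P.mulVec z i) ^ 2 := by
    intro w z
    rw [← Matrix.mulVec_mulVec, ← Matrix.mulVec_mulVec, dotProduct_mulVec,
      Matrix.vecMul_transpose]
    simp [dotProduct, Matrix.mulVec_diagonal]
    exact Finset.sum_congr rfl fun i _ => by ring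
  -- inverse of S
  have hSinv : S⁻¹ = Pᵀ * Matrix.diagonal (fun i => (ν i)⁻¹) * P := by
    apply Matrix.inv_eq_right_inv
    rw [hS_diag]
    calc Pᵀ * Matrix.diagonal ν * P * (Pᵀ * Matrix.diagonal (fun i => (ν i)⁻¹) * P)
        = Pᵀ * Matrix.diagonal ν * (P * Pᵀ) * Matrix.diagonal (fun i => (ν i)⁻¹) * P := by
          noncomm_ring
      _ = Pᵀ * (Matrix.diagonal ν * Matrix.diagonal (fun i => (ν i)⁻¹)) * P := by
          rw [hPP]; noncomm_ring
      _ = Pᵀ * P := by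
          rw [Matrix.diagonal_mul_diagonal]
          congr 1
          · congr 1
            have : (fun i => ν i * (ν i)⁻¹) = fun _ => (1 : ℝ) := by
              funext i; exact mul_inv_cancel₀ (hν i).ne'
            rw [this, Matrix.diagonal_one, Matrix.mul_one]
      _ = 1 := hP
  -- determinant of S
  have hdetS : S.det = ∏ i, ν i := by
    rw [hS_diag, Matrix.det_mul, Matrix.det_mul, Matrix.det_transpose,
      Matrix.det_diagonal]
    linear_combination (∏ i, ν i) * hdetP
  -- the target one-dimensional integrands
  set w : Fin d → ℝ := P.mulVec (y - v) with hw
  set F : Fin d → ℝ → ℝ := fun i s =>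
    Real.exp (-(s - w i) ^ 2 / (2 * l ^ 2)) * ψ i s * p₁ i s with hF
  -- pointwise factorization of the integrand
  have hpoint : ∀ x : Fin d → ℝ,
      Real.exp (-(∑ i, (x i - y i) ^ 2) / (2 * l ^ 2)) *
          (∏ i, ψ i (P.mulVec (x - v) i)) * p x
        = ∏ i, F i (P.mulVec (x - v) i) := by
    intro x
    have hxy : ∀ i, P.mulVec (x - y) i = P.mulVec (x - v) i - w i := by
      intro i
      have : x - y = (x - v) - (y - v) := by abel
      rw [this, Matrix.mulVec_sub]
      simp [hw]
    -- the kernel part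
    have hker : Real.exp (-(∑ i, (x i - y i) ^ 2) / (2 * l ^ 2))
        = ∏ i, Real.exp (-(P.mulVec (x - v) i - w i) ^ 2 / (2 * l ^ 2)) := by
      have h1 : ∑ i, (x i - y i) ^ 2 = ∑ i, (P.mulVec (x - y) i) ^ 2 := by
        have := hquad (fun _ => 1) (x - y)
        have h2 : Pᵀ * Matrix.diagonal (fun _ => (1:ℝ)) * P = 1 := by
          rw [Matrix.diagonal_one, Matrix.mul_one, hP]
        rw [h2] at this
        simpa [dotProduct, sq] using this
      have h3 : ∀ i, (P.mulVec (x - y) i) ^ 2 = (P.mulVec (x - v) i - w i) ^ 2 :=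
        fun i => by rw [hxy i]
      rw [← Real.exp_sum]
      congr 1
      rw [h1]
      simp_rw [h3]
      rw [← Finset.sum_div, ← Finset.sum_neg_distrib]
    -- the density part
    have hdens : p x = ∏ i, p₁ i (P.mulVec (x - v) i) := by
      have hqx : dotProduct (x - v) (S⁻¹.mulVec (x - v))
          = ∑ i, (ν i)⁻¹ * (P.mulVec (x - v) i) ^ 2 := by
        rw [hSinv]; exact hquad _ _
      have hconst : (2 * π) ^ (-(d : ℝ) / 2) * S.det ^ (-(1 : ℝ) / 2)
          = ∏ i, (2 * π * ν i) ^ (-(1 : ℝ) / 2) := by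
        have h2π : (0:ℝ) ≤ 2 * π := by positivity
        have hν' : ∀ i ∈ Finset.univ, (0:ℝ) ≤ ν i := fun i _ => (hν i).le
        rw [hdetS, ← Real.finset_prod_rpow _ _ hν' _]
        have : (2 * π) ^ (-(d : ℝ) / 2) = ∏ _i : Fin d, (2 * π) ^ (-(1:ℝ) / 2) := by
          rw [Finset.prod_const, Finset.card_univ, Fintype.card_fin,
            ← Real.rpow_natCast ((2 * π) ^ (-(1:ℝ)/2)) d, ← Real.rpow_mul h2π]
          congr 1
          push_cast
          ring
        rw [this, ← Finset.prod_mul_distrib]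
        exact Finset.prod_congr rfl fun i _ =>
          (Real.mul_rpow h2π (hν i).le).symm
      have hexp : Real.exp (-(∑ i, (ν i)⁻¹ * (P.mulVec (x - v) i) ^ 2) / 2)
          = ∏ i, Real.exp (-((P.mulVec (x - v) i) ^ 2) / (2 * ν i)) := by
        rw [← Real.exp_sum]
        congr 1
        rw [show -(∑ i, (ν i)⁻¹ * (P.mulVec (x - v) i) ^ 2) / 2
            = ∑ i, -((ν i)⁻¹ * (P.mulVec (x - v) i) ^ 2) / 2 by
          rw [← Finset.sum_neg_distrib, Finset.sum_div]]
        exact Finset.sum_congr rfl fun i _ => by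
          have := (hν i).ne'
          field_simp
      rw [hp]
      simp only
      rw [hqx, hconst, hexp, ← Finset.prod_mul_distrib]
      exact Finset.prod_congr rfl fun i _ => by rw [hp₁ i]
    rw [hker, hdens, hF]
    simp only
    rw [← Finset.prod_mul_distrib, ← Finset.prod_mul_distrib]
  simp_rw [hpoint]
  -- change of variables: translation then the orthogonal map
  have htrans : ∫ x : Fin d → ℝ, ∏ i, F i (P.mulVec (x - v) i)
      = ∫ z : Fin d → ℝ, ∏ i, F i (P.mulVec z i) :=
    integral_sub_right_eq_self (fun z => ∏ i, F i (P.mulVec z i)) v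
  -- the linear equivalence given by P
  have hPe1 : Matrix.toLin' P ∘ₗ Matrix.toLin' Pᵀ = LinearMap.id := by
    rw [← Matrix.toLin'_mul, hPP, Matrix.toLin'_one]
  have hPe2 : Matrix.toLin' Pᵀ ∘ₗ Matrix.toLin' P = LinearMap.id := by
    rw [← Matrix.toLin'_mul, hP, Matrix.toLin'_one]
  let e : (Fin d → ℝ) ≃ₗ[ℝ] (Fin d → ℝ) :=
    LinearEquiv.ofLinear (Matrix.toLin' P) (Matrix.toLin' Pᵀ) hPe1 hPe2
  have hmp : MeasurePreserving (fun z : Fin d → ℝ => P.mulVec z) volume volume := by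
    constructor
    · exact (LinearMap.continuous_on_pi (Matrix.toLin' P)).measurable
    · have hdet' : LinearMap.det (Matrix.toLin' P) ≠ 0 := by
        rwa [LinearMap.det_toLin']
      have := Real.map_linearMap_volume_pi_eq_smul_volume_pi hdet'
      rw [LinearMap.det_toLin', abs_inv, habs] at this
      have hc : (⇑(Matrix.toLin' P)) = fun z : Fin d → ℝ => P.mulVec z := by
        funext z; rfl
      rw [hc] at this
      simpa using this
  have hemb : MeasurableEmbedding (fun z : Fin d → ℝ => P.mulVec z) := by
    have : (fun z : Fin d → ℝ => P.mulVec z)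
        = e.toContinuousLinearEquiv.toHomeomorph := by
      funext z
      rfl
    rw [this]
    exact e.toContinuousLinearEquiv.toHomeomorph.measurableEmbedding
  have hlin : ∫ z : Fin d → ℝ, ∏ i, F i (P.mulVec z i)
      = ∫ u : Fin d → ℝ, ∏ i, F i (u i) :=
    hmp.integral_comp hemb (fun u => ∏ i, F i (u i))
  rw [htrans, hlin, MeasureTheory.integral_fintype_prod_volume_eq_prod F]
  have : ∀ i, ∫ s : ℝ, F i s = μ i * ψ i (w i) := fun i => h_eig i (w i)
  rw [Finset.prod_congr rfl fun i _ => this i, Finset.prod_mul_distrib]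
end

section
/- Spectral decomposition of the RBF kernel under a non-degenerate multivariate Gaussian measure: let l > 0, v ∈ ℝ^d, and Σ a real symmetric positive definite d×d matrix with orthogonal diagonalisation Σ = Pᵀ D P, D = diag(ν₁,…,ν_d), ν_i > 0, P orthogonal. Set a_i = 1/(4ν_i), b = 1/(2l²), c_i = √(a_i² + 2 a_i b), A_i = a_i + b + c_i, B_i = b/A_i. For a multi-index k⃗ = (k₁,…,k_d) ∈ ℕ^d define Φ_{k⃗}(x) = ∏_{i=1}^d exp(−(c_i − a_i)·z_i²)·H_{k_i}(z_i·√(2 c_i)) where z = P(x − v) and H_n is the n-th physicists' Hermite polynomial, and define λ_{k⃗} = ∏_{i=1}^d (2a_i/A_i)^{1/2} · B_i^{k_i}. Then for all y ∈ ℝ^d, ∫_{ℝ^d} exp(−‖x−y‖²/(2l²)) Φ_{k⃗}(x) p(x) dx = λ_{k⃗} · Φ_{k⃗}(y), where p is the density of N(v, Σ); i.e. Φ_{k⃗} is an eigenfunction of the RBF integral operator with eigenvalue λ_{k⃗}. In particular the largest eigenvalue is λ_{0⃗} = ∏_{i=1}^d (2a_i/A_i)^{1/2}, attained at k⃗ =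 0⃗. -/
open MeasureTheory Filter Matrix
open scoped Topology Real

section RBFHelpers
open Real Asymptotics

/-- The physicists' Hermite polynomials `H_n`
(`H_n(x) = (−1)^n e^{x²} (d/dx)^n e^{−x²}`), via their standard recurrence
`H₀ = 1`, `H₁(x) = 2x`, `H_{n+1}(x) = 2x·H_n(x) − 2n·H_{n−1}(x)`. -/
noncomputable def hermiteP : ℕ → ℝ → ℝ
  | 0, _ => 1
  | 1, x => 2 * x
  | (n + 2), x => 2 * x * hermiteP (n + 1) x - 2 * (n + 1) * hermiteP n x

lemma hermiteP_zero (x : ℝ) : hermiteP 0 x = 1 := rfl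
lemma hermiteP_one (x : ℝ) : hermiteP 1 x = 2 * x := rfl
lemma hermiteP_add_two (n : ℕ) (x : ℝ) :
    hermiteP (n + 2) x = 2 * x * hermiteP (n + 1) x - 2 * (n + 1) * hermiteP n x := rfl

lemma hermiteP_exists_poly : ∀ n : ℕ, ∃ q : Polynomial ℝ, ∀ x, hermiteP n x = q.eval x
  | 0 => ⟨1, fun x => by simp [hermiteP_zero]⟩
  | 1 => ⟨Polynomial.C 2 * Polynomial.X, fun x => by simp [hermiteP_one]⟩
  | (n + 2) => by
      obtain ⟨q1, hq1⟩ := hermiteP_exists_poly (n + 1)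
      obtain ⟨q0, hq0⟩ := hermiteP_exists_poly n
      exact ⟨Polynomial.C 2 * Polynomial.X * q1 - Polynomial.C (2 * ((n:ℝ) + 1)) * q0,
        fun x => by simp [hermiteP_add_two, hq1, hq0]⟩

lemma hermiteP_hasDerivAt : ∀ (n : ℕ) (x : ℝ),
    HasDerivAt (hermiteP n) (2 * n * hermiteP (n - 1) x) x
  | 0, x => by
      have : hermiteP 0 = fun _ : ℝ => (1 : ℝ) := funext fun y => hermiteP_zero y
      rw [this]; simpa using hasDerivAt_const x (1 : ℝ)
  | 1, x => by
      have : hermiteP 1 = fun y : ℝ => 2 * y := funext fun y => hermiteP_one y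
      rw [this]
      simpa [hermiteP_zero] using (hasDerivAt_id x).const_mul (2 : ℝ)
  | (n + 2), x => by
      have h1 := hermiteP_hasDerivAt (n + 1) x
      have h0 := hermiteP_hasDerivAt n x
      have e : hermiteP (n + 2) = fun y : ℝ =>
          2 * y * hermiteP (n + 1) y - 2 * (n + 1) * hermiteP n y :=
        funext fun y => hermiteP_add_two n y
      rw [e]
      have hd : HasDerivAt (fun y : ℝ => 2 * y * hermiteP (n + 1) y - 2 * (n + 1) * hermiteP n y)
          ((2 * hermiteP (n+1) x + 2 * x * (2 * (n+1) * hermiteP n x))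
            - 2 * (n + 1) * (2 * n * hermiteP (n-1) x)) x := by
        have : HasDerivAt (fun y : ℝ => 2 * y) 2 x := by
          simpa using (hasDerivAt_id x).const_mul (2 : ℝ)
        have hmul := this.mul h1
        have := hmul.sub (h0.const_mul (2 * (n + 1) : ℝ))
        refine this.congr_deriv ?_
        push_cast
        ring
      convert hd using 1
      show 2 * (n+2 : ℕ) * hermiteP (n + 1) x = _
      rcases n with _ | m
      · simp [hermiteP_one, hermiteP_zero] at *
        ring
      · have : ((m + 1 + 2 : ℕ) : ℝ) = (m : ℝ) + 3 := by push_cast; ring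
        rw [this]
        have e2 : hermiteP (m + 1 + 1) x = 2 * x * hermiteP (m+1) x - 2 * (m+1) * hermiteP m x :=
          hermiteP_add_two m x
        simp only [Nat.add_sub_cancel] at *
        rw [e2]
        push_cast
        ring


lemma tendsto_pow_gauss_atTop (s : ℝ) (hs : 0 < s) (n : ℕ) :
    Tendsto (fun x : ℝ => x ^ n * Real.exp (-s * x ^ 2)) atTop (𝓝 0) := by
  have hlim : Tendsto (fun x : ℝ => Real.exp (-(1/2) * x)) atTop (𝓝 0) := by
    have h1 : Tendsto (fun x : ℝ => (1/2 : ℝ) * x) atTop atTop :=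
      tendsto_id.const_mul_atTop (by norm_num)
    exact (tendsto_exp_neg_atTop_nhds_zero.comp h1).congr
      (fun x => by simp [Function.comp, neg_mul])
  have h := (rpow_mul_exp_neg_mul_sq_isLittleO_exp_neg hs (n : ℝ)).isBigO.trans_tendsto hlim
  simpa [Real.rpow_natCast] using h

lemma tendsto_pow_gauss_atBot (s : ℝ) (hs : 0 < s) (n : ℕ) :
    Tendsto (fun x : ℝ => x ^ n * Real.exp (-s * x ^ 2)) atBot (𝓝 0) := by
  have h := (tendsto_pow_gauss_atTop s hs n).comp tendsto_neg_atBot_atTop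
  have h2 := h.const_mul ((-1 : ℝ) ^ n)
  rw [mul_zero] at h2
  refine h2.congr fun x => ?_
  simp only [Function.comp]
  rw [neg_sq, ← mul_assoc, ← mul_pow]
  norm_num

lemma tendsto_poly_gauss_atTop (s : ℝ) (hs : 0 < s) (q : Polynomial ℝ) :
    Tendsto (fun x : ℝ => q.eval x * Real.exp (-s * x ^ 2)) atTop (𝓝 0) := by
  induction q using Polynomial.induction_on' with
  | add p q hp hq => simpa [add_mul] using hp.add hq
  | monomial n a =>
      have := (tendsto_pow_gauss_atTop s hs n).const_mul a
      rw [mul_zero] at this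
      refine this.congr fun x => ?_
      simp [Polynomial.eval_monomial]; ring

lemma tendsto_poly_gauss_atBot (s : ℝ) (hs : 0 < s) (q : Polynomial ℝ) :
    Tendsto (fun x : ℝ => q.eval x * Real.exp (-s * x ^ 2)) atBot (𝓝 0) := by
  induction q using Polynomial.induction_on' with
  | add p q hp hq => simpa [add_mul] using hp.add hq
  | monomial n a =>
      have := (tendsto_pow_gauss_atBot s hs n).const_mul a
      rw [mul_zero] at this
      refine this.congr fun x => ?_
      simp [Polynomial.eval_monomial]; ring

lemma integrable_poly_gauss (s : ℝ) (hs : 0 < s) (q : Polynomial ℝ) :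
    Integrable fun x : ℝ => q.eval x * Real.exp (-s * x ^ 2) := by
  induction q using Polynomial.induction_on' with
  | add p q hp hq => simpa [add_mul, Pi.add_def] using hp.add hq
  | monomial n a =>
      have h : Integrable fun x : ℝ => x ^ n * Real.exp (-s * x ^ 2) := by
        have := integrable_rpow_mul_exp_neg_mul_sq hs
          (s := (n : ℝ)) (lt_of_lt_of_le neg_one_lt_zero (Nat.cast_nonneg n))
        simpa [Real.rpow_natCast] using this
      have := h.const_mul a
      refine this.congr (Filter.Eventually.of_forall fun x => ?_)
      simp [Polynomial.eval_monomial]; ring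

/-- translated versions -/
lemma integrable_gauss_poly_shift (s y : ℝ) (hs : 0 < s) (q : Polynomial ℝ) :
    Integrable fun x : ℝ => Real.exp (-s * (x - y) ^ 2) * q.eval x := by
  have h := (integrable_poly_gauss s hs (q.comp (Polynomial.X + Polynomial.C y))).comp_sub_right y
  refine h.congr (Filter.Eventually.of_forall fun x => ?_)
  simp [Polynomial.eval_comp]
  ring

lemma tendsto_gauss_poly_shift_atTop (s y : ℝ) (hs : 0 < s) (q : Polynomial ℝ) :
    Tendsto (fun x : ℝ => Real.exp (-s * (x - y) ^ 2) * q.eval x) atTop (𝓝 0) := by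
  have h := (tendsto_poly_gauss_atTop s hs (q.comp (Polynomial.X + Polynomial.C y))).comp
    (tendsto_atTop_add_const_right atTop (-y) tendsto_id)
  refine h.congr fun x => ?_
  simp [Function.comp, Polynomial.eval_comp]
  ring_nf

lemma tendsto_gauss_poly_shift_atBot (s y : ℝ) (hs : 0 < s) (q : Polynomial ℝ) :
    Tendsto (fun x : ℝ => Real.exp (-s * (x - y) ^ 2) * q.eval x) atBot (𝓝 0) := by
  have h := (tendsto_poly_gauss_atBot s hs (q.comp (Polynomial.X + Polynomial.C y))).comp
    (tendsto_atBot_add_const_right atBot (-y) tendsto_id)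
  refine h.congr fun x => ?_
  simp [Function.comp, Polynomial.eval_comp]
  ring_nf

lemma integral_deriv_zero {g g' : ℝ → ℝ} (hd : ∀ x, HasDerivAt g (g' x) x)
    (hi : Integrable g') (ht : Tendsto g atTop (𝓝 0)) (hb : Tendsto g atBot (𝓝 0)) :
    ∫ x, g' x = 0 := by
  have h1 := integral_Ioi_of_hasDerivAt_of_tendsto' (a := 0) (fun x _ => hd x)
    hi.integrableOn ht
  have h2 := integral_Iic_of_hasDerivAt_of_tendsto' (a := 0) (fun x _ => hd x)
    hi.integrableOn hb
  rw [← intervalIntegral.integral_Iic_add_Ioi (b := (0:ℝ)) hi.integrableOn hi.integrableOn, h1, h2]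
  ring

-- new material
lemma integrable_gauss_polyhermite (s y α : ℝ) (hs : 0 < s) (n : ℕ) (q : Polynomial ℝ) :
    Integrable fun x : ℝ => Real.exp (-s * (x - y) ^ 2) * (q.eval x * hermiteP n (α * x)) := by
  obtain ⟨p, hp⟩ := hermiteP_exists_poly n
  refine (integrable_gauss_poly_shift s y hs
    (q * p.comp (Polynomial.C α * Polynomial.X))).congr
    (Filter.Eventually.of_forall fun x => ?_)
  simp [hp, Polynomial.eval_comp]

lemma integrable_gauss_hermite (s y α : ℝ) (hs : 0 < s) (n : ℕ) :
    Integrable fun x : ℝ => Real.exp (-s * (x - y) ^ 2) * hermiteP n (α * x) := by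
  simpa using integrable_gauss_polyhermite s y α hs n 1

lemma hasDerivAt_gauss_hermite (s y α : ℝ) (n : ℕ) (x : ℝ) :
    HasDerivAt (fun x => Real.exp (-s * (x - y) ^ 2) * hermiteP (n + 1) (α * x))
      (Real.exp (-s * (x - y) ^ 2) *
        ((-s * (2 * (x - y))) * hermiteP (n + 1) (α * x)
          + 2 * (n + 1) * hermiteP n (α * x) * α)) x := by
  have h1 : HasDerivAt (fun x : ℝ => Real.exp (-s * (x - y) ^ 2))
      (Real.exp (-s * (x - y) ^ 2) * (-s * (2 * (x - y)))) x := by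
    have hin : HasDerivAt (fun x : ℝ => -s * (x - y) ^ 2) (-s * (2 * (x - y))) x := by
      have := (((hasDerivAt_id x).sub_const y).pow 2).const_mul (-s)
      simpa using this
    exact hin.exp
  have h2 : HasDerivAt (fun x : ℝ => hermiteP (n + 1) (α * x))
      (2 * (n + 1) * hermiteP n (α * x) * α) x := by
    have hc : HasDerivAt (fun x : ℝ => α * x) α x := by
      simpa using (hasDerivAt_id x).const_mul α
    have := (hermiteP_hasDerivAt (n + 1) (α * x)).comp x hc
    simpa [Function.comp_def] using this
  have := h1.mul h2
  refine this.congr_deriv ?_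
  ring

/-- The key one-dimensional Hermite–Gaussian integral. -/
lemma hermite_gauss_integral (s α : ℝ) (hs : 0 < s) (hr : 0 < 1 - α ^ 2 / s) :
    ∀ (n : ℕ) (y : ℝ), (∫ x : ℝ, Real.exp (-s * (x - y) ^ 2) * hermiteP n (α * x))
      = Real.sqrt (π / s) * Real.sqrt (1 - α ^ 2 / s) ^ n *
          hermiteP n (α * y / Real.sqrt (1 - α ^ 2 / s))
  | 0, y => by
      simp only [hermiteP_zero, mul_one, pow_zero]
      rw [show (fun x : ℝ => Real.exp (-s * (x - y) ^ 2))
          = fun x : ℝ => (fun u : ℝ => Real.exp (-s * u ^ 2)) (x - y) from rfl]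
      rw [integral_sub_right_eq_self (μ := volume) (fun u : ℝ => Real.exp (-s * u ^ 2)) y]
      rw [integral_gaussian]
  | 1, y => by
      have hx : (∫ x : ℝ, x * Real.exp (-s * (x - y) ^ 2)) = y * Real.sqrt (π / s) := by
        have h := integral_sub_right_eq_self (μ := volume) (fun u : ℝ => (u + y) * Real.exp (-s * u ^ 2)) y
        have e1 : (fun x : ℝ => (fun u : ℝ => (u + y) * Real.exp (-s * u ^ 2)) (x - y))
            = fun x : ℝ => x * Real.exp (-s * (x - y) ^ 2) := by
          funext x; simp [sub_add_cancel]
        rw [e1] at h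
        rw [h]
        have hodd : (∫ u : ℝ, u * Real.exp (-s * u ^ 2)) = 0 := by
          have hneg := MeasureTheory.integral_neg_eq_self
            (fun u : ℝ => u * Real.exp (-s * u ^ 2)) volume
          have : (∫ u : ℝ, (-u) * Real.exp (-s * (-u) ^ 2))
              = - ∫ u : ℝ, u * Real.exp (-s * u ^ 2) := by
            rw [← integral_neg]; congr 1; funext u; rw [neg_sq]; ring
          rw [this] at hneg
          linarith
        have hi1 : Integrable fun u : ℝ => u * Real.exp (-s * u ^ 2) :=
          integrable_mul_exp_neg_mul_sq hs
        have hi2 : Integrable fun u : ℝ => y * Real.exp (-s * u ^ 2) :=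
          (integrable_exp_neg_mul_sq hs).const_mul y
        have : (∫ u : ℝ, (u + y) * Real.exp (-s * u ^ 2))
            = (∫ u : ℝ, u * Real.exp (-s * u ^ 2)) + ∫ u : ℝ, y * Real.exp (-s * u ^ 2) := by
          rw [← integral_add hi1 hi2]; congr 1; funext u; ring
        rw [this, hodd, integral_const_mul, integral_gaussian]
        ring
      calc (∫ x : ℝ, Real.exp (-s * (x - y) ^ 2) * hermiteP 1 (α * x))
          = ∫ x : ℝ, (2 * α) * (x * Real.exp (-s * (x - y) ^ 2)) := by
            congr 1; funext x; rw [hermiteP_one]; ring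
        _ = (2 * α) * ∫ x : ℝ, x * Real.exp (-s * (x - y) ^ 2) := integral_const_mul _ _
        _ = (2 * α) * (y * Real.sqrt (π / s)) := by rw [hx]
        _ = _ := by
            rw [hermiteP_one, pow_one]
            have hu : Real.sqrt (1 - α ^ 2 / s) ≠ 0 := by
              positivity
            have hcancel : α * y / Real.sqrt (1 - α ^ 2 / s) * Real.sqrt (1 - α ^ 2 / s)
                = α * y := div_mul_cancel₀ _ hu
            linear_combination (-2 * Real.sqrt (π / s)) * hcancel
  | (n + 2), y => by
      have IH1 := hermite_gauss_integral s α hs hr (n + 1) y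
      have IH0 := hermite_gauss_integral s α hs hr n y
      set u := Real.sqrt (1 - α ^ 2 / s) with hu
      have hu0 : 0 < u := Real.sqrt_pos.mpr hr
      have hu2 : u ^ 2 = 1 - α ^ 2 / s := Real.sq_sqrt hr.le
      set w := α * y / u with hw
      set C := Real.sqrt (π / s) with hC
      obtain ⟨p1, hp1⟩ := hermiteP_exists_poly (n + 1)
      obtain ⟨p0, hp0⟩ := hermiteP_exists_poly n
      -- integration by parts identity
      have hIBP : (∫ x : ℝ, Real.exp (-s * (x - y) ^ 2) *
            ((-s * (2 * (x - y))) * hermiteP (n + 1) (α * x)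
              + 2 * (n + 1) * hermiteP n (α * x) * α)) = 0 := by
        apply integral_deriv_zero (g := fun x => Real.exp (-s * (x - y) ^ 2) *
            hermiteP (n + 1) (α * x))
        · exact fun x => hasDerivAt_gauss_hermite s y α n x
        · refine (integrable_gauss_poly_shift s y hs
            ((Polynomial.C (-s * 2) * (Polynomial.X - Polynomial.C y)) *
              (p1.comp (Polynomial.C α * Polynomial.X))
              + Polynomial.C (2 * (n + 1) * α) * (p0.comp (Polynomial.C α * Polynomial.X)))).congr
            (Filter.Eventually.of_forall fun x => ?_)
          simp [hp1, hp0, Polynomial.eval_comp]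
          ring
        · have := tendsto_gauss_poly_shift_atTop s y hs (p1.comp (Polynomial.C α * Polynomial.X))
          refine this.congr fun x => ?_
          simp [hp1, Polynomial.eval_comp]
        · have := tendsto_gauss_poly_shift_atBot s y hs (p1.comp (Polynomial.C α * Polynomial.X))
          refine this.congr fun x => ?_
          simp [hp1, Polynomial.eval_comp]
      -- split the IBP integral
      have i1 : Integrable (fun x : ℝ => (-2 * s) * (Real.exp (-s * (x - y) ^ 2) *
          (x * hermiteP (n + 1) (α * x)))) :=
        ((integrable_gauss_polyhermite s y α hs (n + 1) Polynomial.X).const_mul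
          (-2 * s)).congr (Filter.Eventually.of_forall fun x => by
            simp only [Polynomial.eval_X])
      have i2 : Integrable (fun x : ℝ => (2 * s * y) * (Real.exp (-s * (x - y) ^ 2) *
          hermiteP (n + 1) (α * x))) :=
        (integrable_gauss_hermite s y α hs (n + 1)).const_mul (2 * s * y)
      have i3 : Integrable (fun x : ℝ => (2 * ((n : ℝ) + 1) * α) * (Real.exp (-s * (x - y) ^ 2) *
          hermiteP n (α * x))) :=
        (integrable_gauss_hermite s y α hs n).const_mul (2 * ((n : ℝ) + 1) * α)
      have hsplit : (∫ x : ℝ, Real.exp (-s * (x - y) ^ 2) *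
            ((-s * (2 * (x - y))) * hermiteP (n + 1) (α * x)
              + 2 * (n + 1) * hermiteP n (α * x) * α))
          = (-2 * s) * (∫ x : ℝ, Real.exp (-s * (x - y) ^ 2) *
              (x * hermiteP (n + 1) (α * x)))
            + (2 * s * y) * (∫ x : ℝ, Real.exp (-s * (x - y) ^ 2) * hermiteP (n + 1) (α * x))
            + (2 * ((n : ℝ) + 1) * α) *
              (∫ x : ℝ, Real.exp (-s * (x - y) ^ 2) * hermiteP n (α * x)) := by
        calc (∫ x : ℝ, Real.exp (-s * (x - y) ^ 2) *
            ((-s * (2 * (x - y))) * hermiteP (n + 1) (α * x)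
              + 2 * (n + 1) * hermiteP n (α * x) * α))
            = ∫ x : ℝ, ((-2 * s) * (Real.exp (-s * (x - y) ^ 2) *
                (x * hermiteP (n + 1) (α * x)))
              + (2 * s * y) * (Real.exp (-s * (x - y) ^ 2) * hermiteP (n + 1) (α * x))
              + (2 * ((n : ℝ) + 1) * α) * (Real.exp (-s * (x - y) ^ 2) *
                hermiteP n (α * x))) := by
              congr 1; funext x; ring
          _ = _ := by
              have i12 : Integrable (fun x : ℝ => (-2 * s) * (Real.exp (-s * (x - y) ^ 2) *
                  (x * hermiteP (n + 1) (α * x)))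
                + (2 * s * y) * (Real.exp (-s * (x - y) ^ 2) * hermiteP (n + 1) (α * x))) := by
                exact i1.add i2
              rw [integral_add i12 i3, integral_add i1 i2,
                integral_const_mul, integral_const_mul, integral_const_mul]
      have hXH : (∫ x : ℝ, Real.exp (-s * (x - y) ^ 2) * (x * hermiteP (n + 1) (α * x)))
          = y * (C * u ^ (n + 1) * hermiteP (n + 1) w)
            + ((n + 1) * α / s) * (C * u ^ n * hermiteP n w) := by
        rw [hsplit, IH1, IH0] at hIBP
        have hs' : s ≠ 0 := ne_of_gt hs
        have h2s : (-2 : ℝ) * s ≠ 0 := mul_ne_zero (by norm_num) hs'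
        apply mul_left_cancel₀ h2s
        have hss : s * s⁻¹ = 1 := mul_inv_cancel₀ hs'
        linear_combination hIBP + (2 * ((n : ℝ) + 1) * α * (C * u ^ n * hermiteP n w)) * hss
      -- main computation
      have hstep : (∫ x : ℝ, Real.exp (-s * (x - y) ^ 2) * hermiteP (n + 2) (α * x))
          = 2 * α * (∫ x : ℝ, Real.exp (-s * (x - y) ^ 2) * (x * hermiteP (n + 1) (α * x)))
            - 2 * (n + 1) * (∫ x : ℝ, Real.exp (-s * (x - y) ^ 2) * hermiteP n (α * x)) := by
        rw [← integral_const_mul, ← integral_const_mul, ← integral_sub]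
        · congr 1; funext x; rw [hermiteP_add_two]; push_cast; ring
        · exact ((integrable_gauss_polyhermite s y α hs (n + 1) Polynomial.X).const_mul
            (2 * α)).congr (Filter.Eventually.of_forall fun x => by
              simp only [Polynomial.eval_X])
        · exact ((integrable_gauss_hermite s y α hs n).const_mul (2 * ((n : ℝ) + 1)))
      rw [hstep, hXH, IH0, hermiteP_add_two n w]
      have hwu : w * u = α * y := div_mul_cancel₀ _ (ne_of_gt hu0)
      have hs' : s ≠ 0 := ne_of_gt hs
      rw [pow_succ, pow_succ]
      linear_combination (-2 * C * u ^ n * u * hermiteP (n + 1) w) * hwu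
        + (2 * ((n : ℝ) + 1) * C * u ^ n * hermiteP n w) * hu2

/-- the one-dimensional eigenrelation, packaged for use per-coordinate -/
lemma oneDim_eigen (ν a b c A B : ℝ) (hν : 0 < ν) (hb : 0 < b)
    (ha : a = 1 / (4 * ν)) (hc : c = Real.sqrt (a ^ 2 + 2 * a * b))
    (hA : A = a + b + c) (hB : B = b / A) (k : ℕ) (w : ℝ) :
    (∫ t : ℝ, Real.exp (-b * (t - w) ^ 2) *
        (Real.exp (-(c - a) * t ^ 2) * hermiteP k (t * Real.sqrt (2 * c))) *
        ((2 * π) ^ (-(1 : ℝ) / 2) * ν ^ (-(1 : ℝ) / 2) * Real.exp (-(t ^ 2 / ν) / 2)))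
      = Real.sqrt (2 * a / A) * B ^ k *
          (Real.exp (-(c - a) * w ^ 2) * hermiteP k (w * Real.sqrt (2 * c))) := by
  have ha0 : 0 < a := by rw [ha]; positivity
  have hc2 : c ^ 2 = a ^ 2 + 2 * a * b := by rw [hc]; exact Real.sq_sqrt (by positivity)
  have hc0 : 0 < c := by
    rw [hc]; exact Real.sqrt_pos.mpr (by positivity)
  have hA0 : 0 < A := by rw [hA]; positivity
  have hB0 : 0 < B := by rw [hB]; positivity
  have hAne : A ≠ 0 := ne_of_gt hA0
  have hνne : ν ≠ 0 := ne_of_gt hν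
  set α := Real.sqrt (2 * c) with hα
  have hα2 : α ^ 2 = 2 * c := Real.sq_sqrt (by positivity)
  -- the parameter r of the key lemma
  have hkey : b ^ 2 = A ^ 2 - 2 * c * A := by
    rw [hA]; linear_combination hc2
  have hrB : 1 - α ^ 2 / A = B ^ 2 := by
    rw [hα2, hB, div_pow, hkey]
    field_simp
  have hr0 : 0 < 1 - α ^ 2 / A := by rw [hrB]; positivity
  have hsqrtr : Real.sqrt (1 - α ^ 2 / A) = B := by
    rw [hrB]; exact Real.sqrt_sq hB0.le
  set m := b * w / A with hm
  -- pointwise exponent rearrangement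
  have hpt : ∀ t : ℝ,
      Real.exp (-b * (t - w) ^ 2) * (Real.exp (-(c - a) * t ^ 2) * hermiteP k (t * α)) *
        ((2 * π) ^ (-(1 : ℝ) / 2) * ν ^ (-(1 : ℝ) / 2) * Real.exp (-(t ^ 2 / ν) / 2))
      = ((2 * π) ^ (-(1 : ℝ) / 2) * ν ^ (-(1 : ℝ) / 2) * Real.exp (-(c - a) * w ^ 2)) *
          (Real.exp (-A * (t - m) ^ 2) * hermiteP k (α * t)) := by
    intro t
    have hexp : -b * (t - w) ^ 2 + (-(c - a) * t ^ 2) + (-(t ^ 2 / ν) / 2)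
        = -(c - a) * w ^ 2 + (-A * (t - m) ^ 2) := by
      have hACA : A * (c - a) = b * (a + c) := by
        rw [hA]; linear_combination hc2
      have hm'' : m * A = b * w := by rw [hm]; field_simp
      have hrepl : -(t ^ 2 / ν) / 2 = -(2 * a) * t ^ 2 := by
        rw [ha]; field_simp; ring
      rw [hrepl]
      apply mul_right_cancel₀ hAne
      linear_combination (A * t ^ 2 - b * w ^ 2) * hA + w ^ 2 * hACA
        + (-2 * t * A + b * w + m * A) * hm''
    calc Real.exp (-b * (t - w) ^ 2) * (Real.exp (-(c - a) * t ^ 2) * hermiteP k (t * α)) *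
          ((2 * π) ^ (-(1 : ℝ) / 2) * ν ^ (-(1 : ℝ) / 2) * Real.exp (-(t ^ 2 / ν) / 2))
        = ((2 * π) ^ (-(1 : ℝ) / 2) * ν ^ (-(1 : ℝ) / 2)) *
            Real.exp (-b * (t - w) ^ 2 + (-(c - a) * t ^ 2) + (-(t ^ 2 / ν) / 2)) *
            hermiteP k (α * t) := by
          rw [Real.exp_add, Real.exp_add, mul_comm t α]; ring
      _ = _ := by rw [hexp, Real.exp_add]; ring
  simp_rw [hpt]
  rw [integral_const_mul, hermite_gauss_integral A α hA0 hr0 k m, hsqrtr]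
  have hαm : α * m / B = w * α := by
    rw [hm, hB]; field_simp
  rw [hαm]
  have hK : (2 * π) ^ (-(1 : ℝ) / 2) * ν ^ (-(1 : ℝ) / 2) * Real.sqrt (π / A)
      = Real.sqrt (2 * a / A) := by
    have h2π : (0:ℝ) ≤ 2 * π := by positivity
    rw [show (-(1:ℝ)/2) = -(1/2) by norm_num, Real.rpow_neg h2π, Real.rpow_neg hν.le,
      ← Real.sqrt_eq_rpow, ← Real.sqrt_eq_rpow, ← Real.sqrt_inv, ← Real.sqrt_inv,
      ← Real.sqrt_mul (by positivity), ← Real.sqrt_mul (by positivity)]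
    congr 1
    rw [ha]
    field_simp
    ring
  calc (2 * π) ^ (-(1:ℝ)/2) * ν ^ (-(1:ℝ)/2) * Real.exp (-(c - a) * w ^ 2) *
        (Real.sqrt (π / A) * B ^ k * hermiteP k (w * α))
      = ((2 * π) ^ (-(1:ℝ)/2) * ν ^ (-(1:ℝ)/2) * Real.sqrt (π / A)) * B ^ k *
          (Real.exp (-(c - a) * w ^ 2) * hermiteP k (w * α)) := by ring
    _ = _ := by rw [hK]

lemma hermiteP_continuous (n : ℕ) : Continuous (hermiteP n) := by
  obtain ⟨q, hq⟩ := hermiteP_exists_poly n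
  have : hermiteP n = fun x => q.eval x := funext hq
  rw [this]; exact q.continuous

lemma integral_comp_mulVec {d : ℕ} (P : Matrix (Fin d) (Fin d) ℝ) (hP : Pᵀ * P = 1)
    (F : (Fin d → ℝ) → ℝ) (hF : Continuous F) :
    ∫ x : Fin d → ℝ, F (P.mulVec x) = ∫ x : Fin d → ℝ, F x := by
  have hdet2 : P.det * P.det = 1 := by
    have h := congrArg Matrix.det hP
    rwa [Matrix.det_mul, Matrix.det_transpose, Matrix.det_one] at h
  have hd0 : P.det ≠ 0 := by
    intro h; rw [h, mul_zero] at hdet2; exact zero_ne_one hdet2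
  have hdet : |P.det⁻¹| = 1 := by
    rcases mul_self_eq_one_iff.mp hdet2 with h | h <;> rw [h] <;> norm_num
  have hmap := Real.map_matrix_volume_pi_eq_smul_volume_pi (M := P) hd0
  have hmeas : AEMeasurable (Matrix.toLin' P) (volume : Measure (Fin d → ℝ)) :=
    (LinearMap.continuous_on_pi (Matrix.toLin' P)).measurable.aemeasurable
  have h1 : ∫ x : Fin d → ℝ, F (Matrix.toLin' P x) = ∫ x : Fin d → ℝ, F x := by
    rw [← MeasureTheory.integral_map hmeas hF.aestronglyMeasurable, hmap, hdet]
    simp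
  have h2 : ∀ x, Matrix.toLin' P x = P.mulVec x := fun x => Matrix.toLin'_apply P x
  simpa [h2] using h1

lemma multi_reduce {d : ℕ} (P : Matrix (Fin d) (Fin d) ℝ) (hP : Pᵀ * P = 1)
    (v : Fin d → ℝ) (f : Fin d → ℝ → ℝ) (hfc : ∀ i, Continuous (f i)) :
    (∫ x : Fin d → ℝ, ∏ i, f i (P.mulVec (x - v) i)) = ∏ i, ∫ t : ℝ, f i t := by
  have hFc : Continuous fun z : Fin d → ℝ => ∏ i, f i (z i) :=
    continuous_finset_prod _ fun i _ => (hfc i).comp (continuous_apply i)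
  calc (∫ x : Fin d → ℝ, ∏ i, f i (P.mulVec (x - v) i))
      = ∫ x : Fin d → ℝ, (fun x => ∏ i, f i (P.mulVec x i)) (x - v) := rfl
    _ = ∫ x : Fin d → ℝ, ∏ i, f i (P.mulVec x i) :=
        integral_sub_right_eq_self (μ := volume) (fun x => ∏ i, f i (P.mulVec x i)) v
    _ = ∫ z : Fin d → ℝ, ∏ i, f i (z i) := integral_comp_mulVec P hP _ hFc
    _ = ∏ i, ∫ t : ℝ, f i t := MeasureTheory.integral_fintype_prod_eq_prod f

lemma dot_mid {d : ℕ} (P : Matrix (Fin d) (Fin d) ℝ) (D : Matrix (Fin d) (Fin d) ℝ)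
    (u : Fin d → ℝ) :
    dotProduct u ((Pᵀ * D * P).mulVec u)
      = dotProduct (P.mulVec u) (D.mulVec (P.mulVec u)) := by
  rw [← Matrix.mulVec_mulVec, ← Matrix.mulVec_mulVec, Matrix.dotProduct_mulVec,
    Matrix.vecMul_transpose]

end RBFHelpers

open Real Asymptotics in
/-- **Spectral decomposition of the RBF kernel under a non-degenerate multivariate
Gaussian measure.** With `aᵢ = 1/(4νᵢ)`, `b = 1/(2l²)`, `cᵢ = √(aᵢ² + 2aᵢb)`,
`Aᵢ = aᵢ + b + cᵢ`, `Bᵢ = b/Aᵢ`, the functions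
`Φ_k⃗(x) = ∏ᵢ exp(−(cᵢ−aᵢ) zᵢ²) H_{kᵢ}(zᵢ √(2cᵢ))`, `z = P(x−v)`, are eigenfunctions
of the RBF integral operator with respect to the `N(v, Σ)` density, with eigenvalues
`λ_k⃗ = ∏ᵢ (2aᵢ/Aᵢ)^{1/2} Bᵢ^{kᵢ}`; in particular the largest eigenvalue is
`λ_0⃗ = ∏ᵢ (2aᵢ/Aᵢ)^{1/2}`, attained at `k⃗ = 0`. -/
theorem rbf_gaussian_spectral_decomposition
    (d : ℕ) (l : ℝ) (hl : 0 < l)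
    (v : Fin d → ℝ)
    (S : Matrix (Fin d) (Fin d) ℝ) (hS_symm : S.IsSymm) (hS_pd : S.PosDef)
    (P : Matrix (Fin d) (Fin d) ℝ) (hP : Pᵀ * P = 1)
    (ν : Fin d → ℝ) (hν : ∀ i, 0 < ν i)
    (hS_diag : S = Pᵀ * Matrix.diagonal ν * P)
    -- the density of the `N(v, Σ)` distribution on `ℝ^d`
    (p : (Fin d → ℝ) → ℝ)
    (hp : p = fun x => (2 * π) ^ (-(d : ℝ) / 2) * S.det ^ (-(1 : ℝ) / 2) *
      Real.exp (-(dotProduct (x - v) (S⁻¹.mulVec (x - v))) / 2))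
    -- the constants of the decomposition
    (a : Fin d → ℝ) (b : ℝ) (c A B : Fin d → ℝ)
    (ha : ∀ i, a i = 1 / (4 * ν i))
    (hb : b = 1 / (2 * l ^ 2))
    (hc : ∀ i, c i = Real.sqrt ((a i) ^ 2 + 2 * a i * b))
    (hA : ∀ i, A i = a i + b + c i)
    (hB : ∀ i, B i = b / A i) :
    -- `Φ_k⃗` is an eigenfunction with eigenvalue `λ_k⃗`
    (∀ (kv : Fin d → ℕ) (y : Fin d → ℝ),
      ∫ x : Fin d → ℝ,
          Real.exp (-(∑ i, (x i - y i) ^ 2) / (2 * l ^ 2)) *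
            (∏ i, Real.exp (-(c i - a i) * (P.mulVec (x - v) i) ^ 2) *
              hermiteP (kv i) (P.mulVec (x - v) i * Real.sqrt (2 * c i))) * p x
        = (∏ i, Real.sqrt (2 * a i / A i) * (B i) ^ (kv i)) *
            ∏ i, Real.exp (-(c i - a i) * (P.mulVec (y - v) i) ^ 2) *
              hermiteP (kv i) (P.mulVec (y - v) i * Real.sqrt (2 * c i))) ∧
    -- the largest eigenvalue is `λ_0⃗ = ∏ᵢ (2aᵢ/Aᵢ)^{1/2}`, attained at `k⃗ = 0`
    ((∏ i, Real.sqrt (2 * a i / A i) * (B i) ^ ((0 : Fin d → ℕ) i)) =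
        ∏ i, Real.sqrt (2 * a i / A i)) ∧
    (∀ kv : Fin d → ℕ,
      (∏ i, Real.sqrt (2 * a i / A i) * (B i) ^ (kv i)) ≤
        ∏ i, Real.sqrt (2 * a i / A i)) := by
  have hb0 : 0 < b := by rw [hb]; positivity
  have ha0 : ∀ i, 0 < a i := fun i => by
    rw [ha]; exact div_pos one_pos (by nlinarith [hν i])
  have hc0 : ∀ i, 0 < c i := fun i => by
    rw [hc]; exact Real.sqrt_pos.mpr (by nlinarith [ha0 i, hb0])
  have hA0 : ∀ i, 0 < A i := fun i => by
    rw [hA]; have h1 := ha0 i; have h2 := hc0 i; linarith [hb0]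
  have hB0 : ∀ i, 0 < B i := fun i => by rw [hB]; exact div_pos hb0 (hA0 i)
  have hB1 : ∀ i, B i ≤ 1 := fun i => by
    rw [hB, div_le_one (hA0 i), hA]
    nlinarith [ha0 i, (hc0 i).le]
  refine ⟨?_, ?_, ?_⟩
  · intro kv y
    set w : Fin d → ℝ := P.mulVec (y - v) with hw
    set f : Fin d → ℝ → ℝ := fun i t =>
      Real.exp (-b * (t - w i) ^ 2) *
        (Real.exp (-(c i - a i) * t ^ 2) * hermiteP (kv i) (t * Real.sqrt (2 * c i))) *
        ((2 * π) ^ (-(1 : ℝ) / 2) * (ν i) ^ (-(1 : ℝ) / 2) *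
          Real.exp (-(t ^ 2 / ν i) / 2)) with hf
    -- determinant of S
    have hdetS : S.det = ∏ i, ν i := by
      have hdet2 : P.det * P.det = 1 := by
        have h := congrArg Matrix.det hP
        rwa [Matrix.det_mul, Matrix.det_transpose, Matrix.det_one] at h
      rw [hS_diag, Matrix.det_mul, Matrix.det_mul, Matrix.det_transpose,
        Matrix.det_diagonal]
      calc P.det * (∏ i, ν i) * P.det = (∏ i, ν i) * (P.det * P.det) := by ring
        _ = ∏ i, ν i := by rw [hdet2, mul_one]
    -- inverse of S
    have hSinv : S⁻¹ = Pᵀ * Matrix.diagonal (fun i => (ν i)⁻¹) * P := by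
      apply Matrix.inv_eq_right_inv
      rw [hS_diag]
      have hPPt : P * Pᵀ = 1 := mul_eq_one_comm.mp hP
      have e1 : Pᵀ * Matrix.diagonal ν * P * (Pᵀ * Matrix.diagonal (fun i => (ν i)⁻¹) * P)
          = Pᵀ * (Matrix.diagonal ν * ((P * Pᵀ) *
              (Matrix.diagonal (fun i => (ν i)⁻¹) * P))) := by
        simp only [Matrix.mul_assoc]
      rw [e1, hPPt, Matrix.one_mul, ← Matrix.mul_assoc (Matrix.diagonal ν),
        Matrix.diagonal_mul_diagonal]
      have : (Matrix.diagonal fun i => ν i * (ν i)⁻¹) = (1 : Matrix (Fin d) (Fin d) ℝ) := by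
        rw [show (fun i => ν i * (ν i)⁻¹) = fun _ => (1:ℝ) from
          funext fun i => mul_inv_cancel₀ (ne_of_gt (hν i)), Matrix.diagonal_one]
      rw [this, Matrix.one_mul, hP]
    -- constant splitting
    have hconst : (2 * π) ^ (-(d : ℝ) / 2) * S.det ^ (-(1 : ℝ) / 2)
        = ∏ i, ((2 * π) ^ (-(1 : ℝ) / 2) * (ν i) ^ (-(1 : ℝ) / 2)) := by
      rw [Finset.prod_mul_distrib, Finset.prod_const, Finset.card_univ, Fintype.card_fin,
        hdetS, ← Real.finset_prod_rpow _ _ (fun i _ => (hν i).le)]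
      congr 1
      rw [← Real.rpow_natCast ((2 * π) ^ (-(1:ℝ)/2)) d, ← Real.rpow_mul (by positivity)]
      congr 1
      ring
    -- quadratic form
    have hquad : ∀ x : Fin d → ℝ, dotProduct (x - v) (S⁻¹.mulVec (x - v))
        = ∑ i, (P.mulVec (x - v) i) ^ 2 / ν i := by
      intro x
      rw [hSinv, dot_mid]
      rw [dotProduct]
      apply Finset.sum_congr rfl
      intro i _
      rw [Matrix.mulVec_diagonal]
      field_simp
    -- kernel
    have hker : ∀ x : Fin d → ℝ, (∑ i, (x i - y i) ^ 2)
        = ∑ i, (P.mulVec (x - v) i - w i) ^ 2 := by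
      intro x
      have h1 : ∀ i, P.mulVec (x - v) i - w i = P.mulVec (x - y) i := by
        intro i
        rw [hw, ← Pi.sub_apply (P.mulVec (x - v)) (P.mulVec (y - v)),
          ← Matrix.mulVec_sub, sub_sub_sub_cancel_right]
      have h2 : (∑ i, (P.mulVec (x - y) i) ^ 2) = ∑ i, (x i - y i) ^ 2 := by
        have hd := dot_mid P 1 (x - y)
        rw [Matrix.mul_one, hP] at hd
        have e1 : dotProduct (x - y) ((1 : Matrix (Fin d) (Fin d) ℝ).mulVec (x - y))
            = ∑ i, (x i - y i) ^ 2 := by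
          rw [Matrix.one_mulVec, dotProduct]
          exact Finset.sum_congr rfl fun i _ => by rw [Pi.sub_apply]; ring
        have e2 : dotProduct (P.mulVec (x - y))
            ((1 : Matrix (Fin d) (Fin d) ℝ).mulVec (P.mulVec (x - y)))
            = ∑ i, (P.mulVec (x - y) i) ^ 2 := by
          rw [Matrix.one_mulVec, dotProduct]
          exact Finset.sum_congr rfl fun i _ => by ring
        rw [e1, e2] at hd
        exact hd.symm
      simp_rw [h1, h2]
    -- pointwise identity
    have hpt : ∀ x : Fin d → ℝ,
        Real.exp (-(∑ i, (x i - y i) ^ 2) / (2 * l ^ 2)) *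
          (∏ i, Real.exp (-(c i - a i) * (P.mulVec (x - v) i) ^ 2) *
            hermiteP (kv i) (P.mulVec (x - v) i * Real.sqrt (2 * c i))) * p x
        = ∏ i, f i (P.mulVec (x - v) i) := by
      intro x
      rw [hp]
      simp only
      rw [hconst, hquad, hker]
      rw [show (-(∑ i, (P.mulVec (x - v) i - w i) ^ 2) / (2 * l ^ 2))
          = ∑ i, (-b * (P.mulVec (x - v) i - w i) ^ 2) from by
        rw [hb]; rw [← Finset.sum_neg_distrib, Finset.sum_div]
        exact Finset.sum_congr rfl fun i _ => by field_simp]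
      rw [show (-(∑ i, (P.mulVec (x - v) i) ^ 2 / ν i) / 2)
          = ∑ i, (-((P.mulVec (x - v) i) ^ 2 / ν i) / 2) from by
        rw [← Finset.sum_neg_distrib, Finset.sum_div]]
      rw [Real.exp_sum, Real.exp_sum, ← Finset.prod_mul_distrib, ← Finset.prod_mul_distrib,
        ← Finset.prod_mul_distrib]
      all_goals refine Finset.prod_congr rfl fun i _ => ?_
      all_goals simp only [hf]
      all_goals ring
    -- continuity
    have hfc : ∀ i, Continuous (f i) := by
      intro i
      rw [hf]
      apply Continuous.mul
      apply Continuous.mul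
      · exact (Real.continuous_exp.comp (by fun_prop))
      · exact (Real.continuous_exp.comp (by fun_prop)).mul
          ((hermiteP_continuous (kv i)).comp (continuous_id.mul continuous_const))
      · exact continuous_const.mul (Real.continuous_exp.comp (by fun_prop))
    have hFc : Continuous (fun z : Fin d → ℝ => ∏ i, f i (z i)) :=
      continuous_finset_prod _ fun i _ => (hfc i).comp (continuous_apply i)
    -- the chain
    rw [show (fun x : Fin d → ℝ =>
        Real.exp (-(∑ i, (x i - y i) ^ 2) / (2 * l ^ 2)) *
          (∏ i, Real.exp (-(c i - a i) * (P.mulVec (x - v) i) ^ 2) *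
            hermiteP (kv i) (P.mulVec (x - v) i * Real.sqrt (2 * c i))) * p x)
      = fun x : Fin d → ℝ => ∏ i, f i (P.mulVec (x - v) i) from funext hpt]
    rw [multi_reduce P hP v f hfc]
    rw [show (∏ i, ∫ t : ℝ, f i t)
        = ∏ i, (Real.sqrt (2 * a i / A i) * (B i) ^ (kv i) *
            (Real.exp (-(c i - a i) * (w i) ^ 2) *
              hermiteP (kv i) (w i * Real.sqrt (2 * c i)))) from
      Finset.prod_congr rfl fun i _ =>
        oneDim_eigen (ν i) (a i) b (c i) (A i) (B i) (hν i) hb0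
          (ha i) (hc i) (hA i) (hB i) (kv i) (w i)]
    rw [Finset.prod_mul_distrib]
  · exact Finset.prod_congr rfl fun i _ => by simp
  · intro kv
    apply Finset.prod_le_prod
    · intro i _
      have := hB0 i
      positivity
    · intro i _
      have h1 : (B i) ^ (kv i) ≤ 1 := pow_le_one₀ (hB0 i).le (hB1 i)
      nlinarith [Real.sqrt_nonneg (2 * a i / A i), h1]
end
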